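/- Let x, x̃ ∈ X, let z★ be a longest common subsequence of x and x̃, let ε★ ∈ E(x) and ε̃★ ∈ E(x̃) satisfy apply(x, ε★) = apply(x̃, ε̃★) = z★, and let ψ, ψ̃ ∈ (0,1). Then for every base classifier f̄ : X → Y and class y ∈ Y, p_y(x̃; f̄, ψ̃) ≤ (ψ̃^{|x̃|} / ψ^{|x|}) · Σ_{ε ∈ E(x, ε★)} ρ(ψ, ψ̃)^{|ε|} · s_{f̄,ψ}(ε, x) + 1 − ψ̃^{|x̃| − |z★|}, where ρ(ψ, ψ̃) := ψ(1−ψ̃)/(ψ̃(1−ψ)). -/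

import Mathlib

/-- Apply a deletion indicator: keep the tokens at positions `i` with `ε i = true`, in order. -/
def applyDel {Ω : Type*} (x : List Ω) (ε : Fin x.length → Bool) : List Ω :=
  (List.finRange x.length).filterMap fun i => if ε i then some (x.get i) else none

/-- Number of retained tokens `|ε|`. -/
def retained {n : ℕ} (ε : Fin n → Bool) : ℕ :=
  (Finset.univ.filter fun i => ε i = true).card

/-- `q_ψ(ε|x) = ψ^{|x|-|ε|} (1-ψ)^{|ε|}`. -/
noncomputable def qdel {Ω : Type*} (ψ : ℝ) (x : List Ω) (ε : Fin x.length → Bool) : ℝ :=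
  ψ ^ (x.length - retained ε) * (1 - ψ) ^ (retained ε)

/-- The score `s_{f̄,ψ}(ε, x) = q_ψ(ε|x)·1[f̄(apply(x,ε)) = y]`. -/
noncomputable def score {Ω Y : Type*} [DecidableEq Y] (f : List Ω → Y) (y : Y) (ψ : ℝ)
    (x : List Ω) (ε : Fin x.length → Bool) : ℝ :=
  qdel ψ x ε * (if f (applyDel x ε) = y then 1 else 0)

/-- The smoothed class probability `p_y(x; f̄, ψ) = Σ_{ε ∈ E(x)} s_{f̄,ψ}(ε, x)`. -/
noncomputable def smoothedProb {Ω Y : Type*} [DecidableEq Y] (f : List Ω → Y) (y : Y)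
    (ψ : ℝ) (x : List Ω) : ℝ :=
  ∑ ε : Fin x.length → Bool, score f y ψ x ε

/-- `z` is a longest common subsequence of `x` and `x̃`. -/
def IsLCS {Ω : Type*} (z x xt : List Ω) : Prop :=
  z.Sublist x ∧ z.Sublist xt ∧ ∀ w : List Ω, w.Sublist x → w.Sublist xt → w.length ≤ z.length

lemma retained_eq_sum {n : ℕ} (ε : Fin n → Bool) :
    retained ε = ∑ i : Fin n, if ε i then 1 else 0 :=
  Finset.card_filter _ _

lemma retained_le {n : ℕ} (ε : Fin n → Bool) : retained ε ≤ n := by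
  classical
  calc retained ε ≤ Finset.univ.card := Finset.card_filter_le _ _
  _ = n := by simp

lemma retained_cons {n : ℕ} (c : Bool) (ε : Fin n → Bool) :
    retained (Fin.cons c ε) = (if c then 1 else 0) + retained ε := by
  rw [retained_eq_sum, retained_eq_sum, Fin.sum_univ_succ]
  simp

lemma sum_pi_succ {n : ℕ} (F : (Fin (n + 1) → Bool) → ℝ) :
    ∑ ε : Fin (n + 1) → Bool, F ε
      = ∑ ε : Fin n → Bool, (F (Fin.cons false ε) + F (Fin.cons true ε)) := by
  rw [← Equiv.sum_comp (Fin.consEquiv fun _ => Bool) F, Fintype.sum_prod_type,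
    Fintype.sum_bool]
  rw [← Finset.sum_add_distrib]
  exact Finset.sum_congr rfl fun ε _ => add_comm _ _

lemma applyDel_cons {Ω : Type*} (a : Ω) (x : List Ω) (ε : Fin (x.length + 1) → Bool) :
    applyDel (a :: x) ε
      = (if ε 0 then [a] else []) ++ applyDel x (fun i => ε i.succ) := by
  show (List.finRange (x.length + 1)).filterMap _ = _
  rw [List.finRange_succ, List.filterMap_cons, List.filterMap_map]
  cases h : ε 0 <;> simp [h, applyDel, Function.comp_def]

lemma sum_pi_cons_list {Ω : Type*} (g : ℕ → List Ω → ℝ) (a : Ω) (zs : List Ω) :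
    ∑ δ : Fin (a :: zs).length → Bool, g (retained δ) (applyDel (a :: zs) δ)
      = ∑ δ : Fin zs.length → Bool,
          (g (retained δ) (applyDel zs δ) + g (1 + retained δ) (a :: applyDel zs δ)) := by
  show ∑ δ : Fin (zs.length + 1) → Bool, g (retained δ) (applyDel (a :: zs) δ) = _
  rw [sum_pi_succ]
  refine Finset.sum_congr rfl fun δ _ => ?_
  rw [retained_cons, retained_cons, applyDel_cons, applyDel_cons]
  simp [Fin.cons_succ]

lemma bool_true_le (b : Bool) : (true ≤ b) ↔ (b = true) := by cases b <;> decide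

lemma filter_sum_cons {Ω : Type*} (g : ℕ → List Ω → ℝ) (a : Ω) (x : List Ω)
    (es : Fin (a :: x).length → Bool) :
    ∑ ε ∈ Finset.univ.filter (fun ε : Fin (a :: x).length → Bool => ∀ j, ε j ≤ es j),
        g (retained ε) (applyDel (a :: x) ε)
      = ∑ ε ∈ Finset.univ.filter
            (fun ε : Fin x.length → Bool => ∀ j, ε j ≤ es (Fin.succ j)),
          (g (retained ε) (applyDel x ε) +
            if es (0 : Fin (x.length + 1)) = true
            then g (1 + retained ε) (a :: applyDel x ε) else 0) := by
  show ∑ ε ∈ Finset.univ.filter (fun ε : Fin (x.length + 1) → Bool => ∀ j, ε j ≤ es j),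
        g (retained ε) (applyDel (a :: x) ε) = _
  rw [Finset.sum_filter, Finset.sum_filter, sum_pi_succ]
  refine Finset.sum_congr rfl fun ε _ => ?_
  have hfalse : (∀ j : Fin (x.length + 1), (Fin.cons false ε : Fin (x.length + 1) → Bool) j ≤ es j)
      ↔ (∀ j, ε j ≤ es (Fin.succ j)) := by
    rw [Fin.forall_fin_succ]; simp
  have htrue : (∀ j : Fin (x.length + 1), (Fin.cons true ε : Fin (x.length + 1) → Bool) j ≤ es j)
      ↔ (es (0 : Fin (x.length + 1)) = true ∧ ∀ j, ε j ≤ es (Fin.succ j)) := by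
    rw [Fin.forall_fin_succ]
    simp [Fin.cons_zero, Fin.cons_succ, bool_true_le]
  rw [if_congr hfalse rfl rfl, if_congr htrue rfl rfl]
  by_cases hc : ∀ j, ε j ≤ es (Fin.succ j)
  · have h1 : applyDel x (fun i => (Fin.cons false ε : Fin (x.length + 1) → Bool) i.succ)
        = applyDel x ε := by simp [Fin.cons_succ]
    have h2 : applyDel x (fun i => (Fin.cons true ε : Fin (x.length + 1) → Bool) i.succ)
        = applyDel x ε := by simp [Fin.cons_succ]
    rw [if_pos hc]
    cases h0 : es (0 : Fin (x.length + 1)) <;>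
      simp [retained_cons, applyDel_cons, Fin.cons_zero, Fin.cons_succ, hc]
  · rw [if_neg hc, if_neg (fun h : _ ∧ _ => hc h.2)]
    simp [hc]

lemma keySum {Ω : Type*} :
    ∀ (x : List Ω) (g : ℕ → List Ω → ℝ) (zs : List Ω) (es : Fin x.length → Bool),
    applyDel x es = zs →
    ∑ ε ∈ Finset.univ.filter (fun ε : Fin x.length → Bool => ∀ j, ε j ≤ es j),
        g (retained ε) (applyDel x ε)
      = ∑ δ : Fin zs.length → Bool, g (retained δ) (applyDel zs δ) := by
  intro x
  induction x with
  | nil =>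
      intro g zs es h
      have hz : zs = [] := by rw [← h]; simp [applyDel]
      subst hz
      simp [applyDel, retained]
  | cons a x ih =>
      intro g zs es h
      rw [filter_sum_cons]
      have hz := applyDel_cons a x es
      rw [hz] at h
      cases h0 : es (0 : Fin (x.length + 1)) with
      | false =>
          rw [h0] at h
          simp only [Bool.false_eq_true, if_false, List.nil_append] at h
          rw [← ih g zs (fun i => es (Fin.succ i)) h]
          refine Finset.sum_congr rfl fun ε _ => ?_
          rw [if_neg (by simp [h0]), add_zero]
      | true =>
          rw [h0] at h
          simp only [if_true, List.singleton_append] at h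
          subst h
          rw [sum_pi_cons_list, Finset.sum_add_distrib, Finset.sum_add_distrib]
          congr 1
          · exact ih g _ (fun i => es (Fin.succ i)) rfl
          · rw [← ih (fun k l => g (1 + k) (a :: l)) _ (fun i => es (Fin.succ i)) rfl]
            refine Finset.sum_congr rfl fun ε _ => ?_
            rw [if_pos rfl]

lemma sum_binom (ψ : ℝ) : ∀ n : ℕ,
    ∑ ε : Fin n → Bool, ψ ^ (n - retained ε) * (1 - ψ) ^ retained ε = 1 := by
  intro n
  induction n with
  | zero => simp [retained]
  | succ n ih =>
      rw [sum_pi_succ (fun ε : Fin (n + 1) → Bool =>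
        ψ ^ (n + 1 - retained ε) * (1 - ψ) ^ retained ε)]
      have h : ∀ ε : Fin n → Bool,
          ψ ^ (n + 1 - retained (Fin.cons false ε)) * (1 - ψ) ^ retained (Fin.cons false ε)
            + ψ ^ (n + 1 - retained (Fin.cons true ε)) * (1 - ψ) ^ retained (Fin.cons true ε)
          = ψ ^ (n - retained ε) * (1 - ψ) ^ retained ε := by
        intro ε
        have hk := retained_le ε
        rw [retained_cons, retained_cons]
        simp only [Bool.false_eq_true, if_true, if_false, Nat.zero_add]
        rw [show n + 1 - retained ε = (n - retained ε) + 1 by omega,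
          show n + 1 - (1 + retained ε) = n - retained ε by omega,
          pow_succ, pow_add]
        ring
      exact (Finset.sum_congr rfl fun ε _ => h ε).trans ih


/-- upper bound on the smoothed class probability at a neighboring input. -/
theorem stmt8 {Ω Y : Type*} [DecidableEq Y] (x xt zs : List Ω)
    (es : Fin x.length → Bool) (ets : Fin xt.length → Bool)
    (hz : IsLCS zs x xt)
    (h1 : applyDel x es = zs) (h2 : applyDel xt ets = zs)
    (ψ ψt : ℝ) (hψ : ψ ∈ Set.Ioo (0 : ℝ) 1) (hψt : ψt ∈ Set.Ioo (0 : ℝ) 1)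
    (f : List Ω → Y) (y : Y) :
    smoothedProb f y ψt xt ≤
      ψt ^ xt.length / ψ ^ x.length *
        (∑ ε ∈ Finset.univ.filter (fun ε : Fin x.length → Bool => ∀ j, ε j ≤ es j),
          (ψ * (1 - ψt) / (ψt * (1 - ψ))) ^ retained ε * score f y ψ x ε) +
      1 - ψt ^ (xt.length - zs.length) := by
  obtain ⟨hψ0, hψ1⟩ := hψ
  obtain ⟨hψt0, hψt1⟩ := hψt
  have hψ1' : (0 : ℝ) < 1 - ψ := by linarith
  have hψt1' : (0 : ℝ) < 1 - ψt := by linarith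
  have hmL : zs.length ≤ x.length := hz.1.length_le
  have hmn : zs.length ≤ xt.length := hz.2.1.length_le
  -- the retained sum over the LCS-compatible ε̃'s
  have hA : (∑ ε ∈ Finset.univ.filter (fun ε : Fin xt.length → Bool => ∀ j, ε j ≤ ets j),
      score f y ψt xt ε)
      = ∑ δ : Fin zs.length → Bool,
          ψt ^ (xt.length - retained δ) * (1 - ψt) ^ retained δ *
            (if f (applyDel zs δ) = y then 1 else 0) :=
    keySum xt (fun k l => ψt ^ (xt.length - k) * (1 - ψt) ^ k *
      (if f l = y then 1 else 0)) zs ets h2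
  -- total deletion mass is 1
  have hsum1 : ∑ ε : Fin xt.length → Bool, qdel ψt xt ε = 1 := sum_binom ψt xt.length
  -- mass of the LCS-compatible ε̃'s
  have hQ : (∑ ε ∈ Finset.univ.filter (fun ε : Fin xt.length → Bool => ∀ j, ε j ≤ ets j),
      qdel ψt xt ε) = ψt ^ (xt.length - zs.length) := by
    have hk : (∑ ε ∈ Finset.univ.filter
        (fun ε : Fin xt.length → Bool => ∀ j, ε j ≤ ets j), qdel ψt xt ε)
        = ∑ δ : Fin zs.length → Bool,
            ψt ^ (xt.length - retained δ) * (1 - ψt) ^ retained δ :=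
      keySum xt (fun k _ => ψt ^ (xt.length - k) * (1 - ψt) ^ k) zs ets h2
    rw [hk]
    have h3 : ∀ δ : Fin zs.length → Bool,
        ψt ^ (xt.length - retained δ) * (1 - ψt) ^ retained δ
        = ψt ^ (xt.length - zs.length) *
            (ψt ^ (zs.length - retained δ) * (1 - ψt) ^ retained δ) := by
      intro δ
      have hr := retained_le δ
      rw [← mul_assoc, ← pow_add]
      congr 2
      omega
    rw [Finset.sum_congr rfl fun δ _ => h3 δ, ← Finset.mul_sum,
      sum_binom ψt zs.length, mul_one]
  have hqnonneg : ∀ ε : Fin xt.length → Bool, 0 ≤ qdel ψt xt ε := fun ε =>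
    mul_nonneg (pow_nonneg hψt0.le _) (pow_nonneg hψt1'.le _)
  have hscore_le : ∀ ε : Fin xt.length → Bool, score f y ψt xt ε ≤ qdel ψt xt ε := by
    intro ε
    by_cases hy : f (applyDel xt ε) = y <;> simp [score, hy, hqnonneg ε]
  have hsplitsum := Finset.sum_filter_add_sum_filter_not Finset.univ
    (fun ε : Fin xt.length → Bool => ∀ j, ε j ≤ ets j) (score f y ψt xt)
  have hsplitq := Finset.sum_filter_add_sum_filter_not Finset.univ
    (fun ε : Fin xt.length → Bool => ∀ j, ε j ≤ ets j) (qdel ψt xt)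
  have hB : (∑ ε ∈ Finset.univ.filter
      (fun ε : Fin xt.length → Bool => ¬ ∀ j, ε j ≤ ets j), score f y ψt xt ε)
      ≤ 1 - ψt ^ (xt.length - zs.length) := by
    have hle : (∑ ε ∈ Finset.univ.filter
        (fun ε : Fin xt.length → Bool => ¬ ∀ j, ε j ≤ ets j), score f y ψt xt ε)
        ≤ ∑ ε ∈ Finset.univ.filter
          (fun ε : Fin xt.length → Bool => ¬ ∀ j, ε j ≤ ets j), qdel ψt xt ε :=
      Finset.sum_le_sum fun ε _ => hscore_le ε
    rw [hsum1] at hsplitq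
    linarith [hle, hsplitq, hQ]
  -- the main term equality
  have hT : ψt ^ xt.length / ψ ^ x.length *
      (∑ ε ∈ Finset.univ.filter (fun ε : Fin x.length → Bool => ∀ j, ε j ≤ es j),
        (ψ * (1 - ψt) / (ψt * (1 - ψ))) ^ retained ε * score f y ψ x ε)
      = ∑ δ : Fin zs.length → Bool,
          ψt ^ (xt.length - retained δ) * (1 - ψt) ^ retained δ *
            (if f (applyDel zs δ) = y then 1 else 0) := by
    have hk : (∑ ε ∈ Finset.univ.filter
        (fun ε : Fin x.length → Bool => ∀ j, ε j ≤ es j),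
        (ψ * (1 - ψt) / (ψt * (1 - ψ))) ^ retained ε * score f y ψ x ε)
        = ∑ δ : Fin zs.length → Bool,
            (ψ * (1 - ψt) / (ψt * (1 - ψ))) ^ retained δ *
              (ψ ^ (x.length - retained δ) * (1 - ψ) ^ retained δ *
                (if f (applyDel zs δ) = y then 1 else 0)) :=
      keySum x (fun k l => (ψ * (1 - ψt) / (ψt * (1 - ψ))) ^ k *
        (ψ ^ (x.length - k) * (1 - ψ) ^ k * (if f l = y then 1 else 0))) zs es h1
    rw [hk, Finset.mul_sum]
    refine Finset.sum_congr rfl fun δ _ => ?_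
    have hr := retained_le δ
    have hkL : retained δ ≤ x.length := hr.trans hmL
    have hkn : retained δ ≤ xt.length := hr.trans hmn
    have hψne : ψ ≠ 0 := ne_of_gt hψ0
    have hψtne : ψt ≠ 0 := ne_of_gt hψt0
    have h1ψne : (1 - ψ) ≠ 0 := ne_of_gt hψ1'
    have h1ψtne : (1 - ψt) ≠ 0 := ne_of_gt hψt1'
    by_cases hy : f (applyDel zs δ) = y
    · simp only [if_pos hy, mul_one]
      rw [pow_sub₀ ψ hψne hkL, pow_sub₀ ψt hψtne hkn, div_pow, mul_pow, mul_pow]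
      field_simp
    · simp [if_neg hy]
  have hsmooth : smoothedProb f y ψt xt
      = (∑ ε ∈ Finset.univ.filter (fun ε : Fin xt.length → Bool => ∀ j, ε j ≤ ets j),
          score f y ψt xt ε)
        + ∑ ε ∈ Finset.univ.filter
            (fun ε : Fin xt.length → Bool => ¬ ∀ j, ε j ≤ ets j), score f y ψt xt ε := by
    rw [smoothedProb, ← hsplitsum]
  linarith [hA, hT, hB, hsmooth]
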